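/- Key martingale lemma for elementary stepwise processes: let (Q(t))_{t∈ℕ} be a K-valued process adapted to a filtration (𝔉_t) such that for every t, almost surely there exists a single player i with q_j(t+1) = q_j(t) for all j ≠ i (at most one player's strategy changes per step). Let F be the multilinear extension of φ. Then for every t, almost surely E[F(Q(t+1)) − F(Q(t)) | 𝔉_t] = Σ_{i=1}^n Σ_{ℓ=1}^{m_i} F(e_ℓ, Q_{-i}(t)) · E[q_{i,ℓ}(t+1) − q_{i,ℓ}(t) | 𝔉_t]. -/

import Mathlib

open Finset

/-- A point of the standard simplex in `ℝ^M`. -/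
def IsSimplex {M : ℕ} (q : Fin M → ℝ) : Prop :=
  (∀ ℓ, 0 ≤ q ℓ) ∧ ∑ ℓ, q ℓ = 1

/-- A mixed profile: one mixed strategy per player. -/
def InK {n : ℕ} {m : Fin n → ℕ} (Q : ∀ i, Fin (m i) → ℝ) : Prop :=
  ∀ i, IsSimplex (Q i)

/-- The `ℓ`-th unit vector `e_ℓ`. -/
def unitVec {M : ℕ} (ℓ : Fin M) : Fin M → ℝ := fun k => if k = ℓ then 1 else 0

/-- The multilinear (mixed) extension of a function on pure profiles:
`ū(Q) = Σ_s (Π_j q_{j, s_j}) c(s)`. -/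
noncomputable def mixedExt {n : ℕ} {m : Fin n → ℕ} (c : (∀ j, Fin (m j)) → ℝ)
    (Q : ∀ i, Fin (m i) → ℝ) : ℝ :=
  ∑ s : ∀ j, Fin (m j), (∏ j, Q j (s j)) * c s

/-- Nash equilibrium: no player can decrease her expected cost by a unilateral
(mixed) deviation. -/
def IsNash {n : ℕ} {m : Fin n → ℕ} (c : ∀ _i : Fin n, (∀ j, Fin (m j)) → ℝ)
    (Q : ∀ i, Fin (m i) → ℝ) : Prop :=
  ∀ i, ∀ q' : Fin (m i) → ℝ, IsSimplex q' →
    mixedExt (c i) Q ≤ mixedExt (c i) (Function.update Q i q')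

/-- The multipopulation replicator vector field:
`G_{i,ℓ}(Q) = -p_i q_{i,ℓ} (ū_i(e_ℓ, Q_{-i}) - ū_i(q_i, Q_{-i}))`. -/
noncomputable def repl {n : ℕ} {m : Fin n → ℕ} (c : ∀ _i : Fin n, (∀ j, Fin (m j)) → ℝ)
    (p : Fin n → ℝ) (Q : ∀ i, Fin (m i) → ℝ) (i : Fin n) (ℓ : Fin (m i)) : ℝ :=
  -(p i) * Q i ℓ *
    (mixedExt (c i) (Function.update Q i (unitVec ℓ)) - mixedExt (c i) Q)


lemma prod_update_eq {n : ℕ} {m : Fin n → ℕ} (Q : ∀ i, Fin (m i) → ℝ) (i : Fin n)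
    (v : Fin (m i) → ℝ) (s : ∀ j, Fin (m j)) :
    (∏ j, Function.update Q i v j (s j)) = v (s i) * ∏ j ∈ univ.erase i, Q j (s j) := by
  rw [← Finset.mul_prod_erase univ _ (mem_univ i)]
  congr 1
  · simp
  · exact Finset.prod_congr rfl fun j hj => by
      rw [Function.update_of_ne (Finset.ne_of_mem_erase hj)]

lemma mixedExt_update {n : ℕ} {m : Fin n → ℕ} (φ : (∀ j, Fin (m j)) → ℝ)
    (Q : ∀ i, Fin (m i) → ℝ) (i : Fin n) (q : Fin (m i) → ℝ) :
    mixedExt φ (Function.update Q i q)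
      = ∑ ℓ, q ℓ * mixedExt φ (Function.update Q i (unitVec ℓ)) := by
  unfold mixedExt
  simp_rw [Finset.mul_sum, prod_update_eq]
  rw [Finset.sum_comm]
  refine Finset.sum_congr rfl fun s _ => ?_
  simp [unitVec, mul_ite, ite_mul, mul_assoc, mul_comm, mul_left_comm]

lemma simplex_le_one {M : ℕ} {q : Fin M → ℝ} (hq : IsSimplex q) (ℓ : Fin M) : q ℓ ≤ 1 := by
  calc q ℓ ≤ ∑ k, q k := Finset.single_le_sum (fun k _ => hq.1 k) (mem_univ ℓ)
    _ = 1 := hq.2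

lemma mixedExt_abs_le {n : ℕ} {m : Fin n → ℕ} (φ : (∀ j, Fin (m j)) → ℝ)
    {R : ∀ i, Fin (m i) → ℝ} (h0 : ∀ j ℓ, 0 ≤ R j ℓ) (h1 : ∀ j ℓ, R j ℓ ≤ 1) :
    |mixedExt φ R| ≤ ∑ s, |φ s| := by
  refine (Finset.abs_sum_le_sum_abs _ _).trans (Finset.sum_le_sum fun s _ => ?_)
  rw [abs_mul]
  calc |∏ j, R j (s j)| * |φ s| ≤ 1 * |φ s| := by
        refine mul_le_mul_of_nonneg_right ?_ (abs_nonneg _)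
        rw [abs_of_nonneg (Finset.prod_nonneg fun j _ => h0 j (s j))]
        exact Finset.prod_le_one (fun j _ => h0 j _) (fun j _ => h1 j _)
    _ = |φ s| := one_mul _

lemma mixedExt_continuous {n : ℕ} {m : Fin n → ℕ} (φ : (∀ j, Fin (m j)) → ℝ) :
    Continuous (mixedExt φ) := by
  unfold mixedExt
  exact continuous_finset_sum _ fun s _ =>
    (continuous_finset_prod _ fun j _ =>
      (continuous_apply (s j)).comp (continuous_apply j)).mul continuous_const

open MeasureTheory

/-- key martingale lemma for elementary stepwise processes: if at
most one player's mixed strategy changes per step, then for the multilinear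
extension `F` of `φ`,
`E[F(Q(t+1)) − F(Q(t)) | 𝔉_t] = Σ_{i,ℓ} F(e_ℓ, Q_{-i}(t)) E[Δq_{i,ℓ} | 𝔉_t]`. -/
theorem stepwise_multiaffine_drift {n : ℕ} {m : Fin n → ℕ}
    (φ : (∀ j, Fin (m j)) → ℝ)
    {Ω : Type*} {m0 : MeasurableSpace Ω} (μ : Measure Ω) [IsProbabilityMeasure μ]
    (ℱ : Filtration ℕ m0)
    (Q : ℕ → Ω → ∀ i, Fin (m i) → ℝ)
    (hadapted : Adapted ℱ Q)
    (hK : ∀ t ω, InK (Q t ω))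
    (hstep : ∀ t : ℕ, ∀ᵐ ω ∂μ, ∃ i : Fin n, ∀ j : Fin n, j ≠ i →
      Q (t + 1) ω j = Q t ω j) :
    ∀ t : ℕ,
      (μ[fun ω => mixedExt φ (Q (t + 1) ω) - mixedExt φ (Q t ω) | ℱ t]) =ᵐ[μ]
        fun ω => ∑ i, ∑ ℓ,
          mixedExt φ (Function.update (Q t ω) i (unitVec ℓ)) *
            (μ[fun ω' => Q (t + 1) ω' i ℓ - Q t ω' i ℓ | ℱ t]) ω := by
  intro t
  classical
  have hle : ℱ t ≤ m0 := ℱ.le t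
  have hQ01 : ∀ u (ω : Ω) (i : Fin n) (ℓ : Fin (m i)), 0 ≤ Q u ω i ℓ ∧ Q u ω i ℓ ≤ 1 :=
    fun u ω i ℓ => ⟨(hK u ω i).1 ℓ, simplex_le_one (hK u ω i) ℓ⟩
  -- abbreviations
  set g : (Σ i : Fin n, Fin (m i)) → Ω → ℝ := fun p ω =>
    mixedExt φ (Function.update (Q t ω) p.1 (unitVec p.2)) *
      (Q (t + 1) ω p.1 p.2 - Q t ω p.1 p.2) with hg
  -- measurability of the factors
  have hFmeas : ∀ (i : Fin n) (ℓ : Fin (m i)),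
      StronglyMeasurable[ℱ t] fun ω => mixedExt φ (Function.update (Q t ω) i (unitVec ℓ)) := by
    intro i ℓ
    exact ((mixedExt_continuous φ).comp
      (continuous_id.update i continuous_const)).comp_stronglyMeasurable (hadapted t).stronglyMeasurable
  have hDmeas : ∀ (i : Fin n) (ℓ : Fin (m i)),
      StronglyMeasurable fun ω => Q (t + 1) ω i ℓ - Q t ω i ℓ := by
    intro i ℓ
    have hc : Continuous fun R : ∀ j, Fin (m j) → ℝ => R i ℓ :=
      (continuous_apply ℓ).comp (continuous_apply i)
    have h1 : StronglyMeasurable fun ω => Q (t + 1) ω i ℓ :=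
      hc.comp_stronglyMeasurable ((hadapted (t + 1)).mono (ℱ.le (t + 1)) le_rfl).stronglyMeasurable
    have h2 : StronglyMeasurable fun ω => Q t ω i ℓ :=
      hc.comp_stronglyMeasurable ((hadapted t).mono hle le_rfl).stronglyMeasurable
    exact h1.sub h2
  -- bounds
  have hFbound : ∀ (i : Fin n) (ℓ : Fin (m i)) (ω : Ω),
      ‖mixedExt φ (Function.update (Q t ω) i (unitVec ℓ))‖ ≤ ∑ s, |φ s| := by
    intro i ℓ ω
    rw [Real.norm_eq_abs]
    refine mixedExt_abs_le φ (fun j k => ?_) (fun j k => ?_) <;>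
      rcases eq_or_ne j i with rfl | hj
    · rw [Function.update_self]; unfold unitVec; split <;> norm_num
    · rw [Function.update_of_ne hj]; exact (hQ01 t ω j k).1
    · rw [Function.update_self]; unfold unitVec; split <;> norm_num
    · rw [Function.update_of_ne hj]; exact (hQ01 t ω j k).2
  -- integrability
  have hDint : ∀ (i : Fin n) (ℓ : Fin (m i)),
      Integrable (fun ω => Q (t + 1) ω i ℓ - Q t ω i ℓ) μ := by
    intro i ℓ
    refine (integrable_const (1 : ℝ)).mono' (hDmeas i ℓ).aestronglyMeasurable
      (Filter.Eventually.of_forall fun ω => ?_)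
    have h1 := hQ01 (t + 1) ω i ℓ
    have h2 := hQ01 t ω i ℓ
    rw [Real.norm_eq_abs]
    exact abs_le.2 ⟨by linarith [h1.1, h2.2], by linarith [h1.2, h2.1]⟩
  have hgint : ∀ p : Σ i : Fin n, Fin (m i), Integrable (g p) μ := by
    intro p
    exact (hDint p.1 p.2).bdd_mul
      ((hFmeas p.1 p.2).mono hle).aestronglyMeasurable
      (Filter.Eventually.of_forall fun ω => hFbound p.1 p.2 ω)
  -- Step B: pointwise a.e. identity
  have hpt : (fun ω => mixedExt φ (Q (t + 1) ω) - mixedExt φ (Q t ω)) =ᵐ[μ]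
      fun ω => ∑ p : Σ i : Fin n, Fin (m i), g p ω := by
    filter_upwards [hstep t] with ω hω
    obtain ⟨i, hi⟩ := hω
    have hQ' : Q (t + 1) ω = Function.update (Q t ω) i (Q (t + 1) ω i) := by
      funext j
      rcases eq_or_ne j i with rfl | h
      · simp
      · rw [Function.update_of_ne h]; exact hi j h
    have e1 : mixedExt φ (Q (t + 1) ω)
        = ∑ ℓ, Q (t + 1) ω i ℓ * mixedExt φ (Function.update (Q t ω) i (unitVec ℓ)) := by
      conv_lhs => rw [hQ']
      rw [mixedExt_update]
    have e2 : mixedExt φ (Q t ω)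
        = ∑ ℓ, Q t ω i ℓ * mixedExt φ (Function.update (Q t ω) i (unitVec ℓ)) := by
      have := mixedExt_update φ (Q t ω) i (Q t ω i)
      rwa [Function.update_eq_self] at this
    rw [← Finset.univ_sigma_univ, Finset.sum_sigma]
    rw [Finset.sum_eq_single i]
    · rw [e1, e2, ← Finset.sum_sub_distrib]
      exact Finset.sum_congr rfl fun ℓ _ => by simp only [hg]; ring
    · intro j _ hj
      refine Finset.sum_eq_zero fun ℓ _ => ?_
      simp only [hg]
      rw [hi j hj, sub_self, mul_zero]
    · intro h; exact absurd (mem_univ i) h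
  refine (condExp_congr_ae hpt).trans ?_
  have hsum : (fun ω => ∑ p : Σ i : Fin n, Fin (m i), g p ω)
      = ∑ p ∈ (univ : Finset (Σ i : Fin n, Fin (m i))), g p := by
    funext ω; rw [Finset.sum_apply]
  rw [hsum]
  refine (condExp_finsetSum (fun p _ => hgint p) (ℱ t)).trans ?_
  -- pull out the measurable factor in each term
  have hpull : ∀ p : Σ i : Fin n, Fin (m i),
      μ[g p|ℱ t] =ᵐ[μ] fun ω =>
        mixedExt φ (Function.update (Q t ω) p.1 (unitVec p.2)) *
          (μ[fun ω' => Q (t + 1) ω' p.1 p.2 - Q t ω' p.1 p.2|ℱ t]) ω := by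
    intro p
    exact condExp_mul_of_stronglyMeasurable_left (hFmeas p.1 p.2) (hgint p) (hDint p.1 p.2)
  have hall : ∀ᵐ ω ∂μ, ∀ p : Σ i : Fin n, Fin (m i),
      (μ[g p|ℱ t]) ω =
        mixedExt φ (Function.update (Q t ω) p.1 (unitVec p.2)) *
          (μ[fun ω' => Q (t + 1) ω' p.1 p.2 - Q t ω' p.1 p.2|ℱ t]) ω :=
    ae_all_iff.2 hpull
  filter_upwards [hall] with ω hω
  rw [Finset.sum_apply, ← Finset.univ_sigma_univ, Finset.sum_sigma]
  exact Finset.sum_congr rfl fun i _ => Finset.sum_congr rfl fun ℓ _ => hω ⟨i, ℓ⟩
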